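/- The number of cycle covers of a k-regular directed graph on n vertices having exactly r cycles is at most C(n,r) · k^(n−r). -/

import Mathlib

open Equiv Equiv.Perm Finset

section Aux

open scoped Classical

variable {V : Type} [Fintype V] [DecidableEq V] [LinearOrder V]

/-- The minimum of the cycle of `v` under `σ`. -/
noncomputable def minCyc (σ : Perm V) (v : V) : V :=
  (univ.filter (fun w => σ.SameCycle v w)).min'
    ⟨v, Finset.mem_filter.mpr ⟨Finset.mem_univ v, Equiv.Perm.SameCycle.refl σ v⟩⟩

/-- The set of vertices mapping to the minimum of their cycle. -/
noncomputable def Tset (σ : Perm V) : Finset V :=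
  univ.filter (fun v => σ v = minCyc σ v)

lemma minCyc_sameCycle (σ : Perm V) (v : V) : σ.SameCycle v (minCyc σ v) := by
  have hm := Finset.min'_mem (univ.filter (fun w => σ.SameCycle v w))
    ⟨v, Finset.mem_filter.mpr ⟨Finset.mem_univ v, Equiv.Perm.SameCycle.refl σ v⟩⟩
  exact (Finset.mem_filter.mp hm).2

lemma minCyc_eq_of_sameCycle (σ : Perm V) {v w : V} (h : σ.SameCycle v w) :
    minCyc σ v = minCyc σ w := by
  unfold minCyc
  congr 1
  ext x
  simp only [mem_filter, mem_univ, true_and]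
  exact ⟨fun hx => h.symm.trans hx, fun hx => h.trans hx⟩

lemma mem_Tset_iff (σ : Perm V) (v : V) : v ∈ Tset σ ↔ σ v = minCyc σ v := by
  simp [Tset]

/-- Each cycle contains at most one element of `Tset`. -/
lemma Tset_unique (σ : Perm V) {v w : V} (hv : v ∈ Tset σ) (hw : w ∈ Tset σ)
    (h : σ.SameCycle v w) : v = w := by
  rw [mem_Tset_iff] at hv hw
  have : σ v = σ w := by rw [hv, hw, minCyc_eq_of_sameCycle σ h]
  exact σ.injective this

/-- Each cycle contains at least one element of `Tset`. -/
lemma Tset_exists (σ : Perm V) (v : V) : ∃ t ∈ Tset σ, σ.SameCycle v t := by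
  have h2 : σ.SameCycle v (σ⁻¹ (minCyc σ v)) :=
    (minCyc_sameCycle σ v).trans ⟨-1, by simp⟩
  refine ⟨σ⁻¹ (minCyc σ v), ?_, h2⟩
  rw [mem_Tset_iff]
  have h1 : σ (σ⁻¹ (minCyc σ v)) = minCyc σ v := σ.apply_symm_apply _
  exact h1.trans (minCyc_eq_of_sameCycle σ h2)

lemma card_Tset (σ : Perm V) (hfp : ∀ v, σ v ≠ v) :
    (Tset σ).card = σ.cycleType.card := by
  have hcard : σ.cycleType.card = σ.cycleFactorsFinset.card := by
    simp [Equiv.Perm.cycleType]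
  rw [hcard]
  refine Finset.card_bij (fun t _ => σ.cycleOf t) ?_ ?_ ?_
  · intro t _
    exact Equiv.Perm.cycleOf_mem_cycleFactorsFinset_iff.mpr (mem_support.mpr (hfp t))
  · intro t ht t' ht' heq
    have heq' : σ.cycleOf t = σ.cycleOf t' := heq
    refine Tset_unique σ ht ht' ?_
    have h1 : (σ.cycleOf t) t' = σ t' := by rw [heq', cycleOf_apply_self]
    have h2 : (σ.cycleOf t) t' = if σ.SameCycle t t' then σ t' else t' :=
      cycleOf_apply σ t t'
    by_cases hs : σ.SameCycle t t'
    · exact hs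
    · rw [if_neg hs] at h2
      exact absurd (h1.symm.trans h2) (hfp t')
  · intro c hc
    have hcyc : c.IsCycle := (mem_cycleFactorsFinset_iff.mp hc).1
    obtain ⟨x, hx, -⟩ := hcyc
    have hxs : x ∈ c.support := mem_support.mpr hx
    have hcx : c = σ.cycleOf x := cycle_is_cycleOf hxs hc
    obtain ⟨t, ht, hst⟩ := Tset_exists σ x
    exact ⟨t, ht, by rw [hcx, hst.cycleOf_eq]⟩

/-- Reconstruction: a permutation is determined by its `Tset` and its values off `Tset`. -/
lemma reconstruct (σ σ' : Perm V) (hT : Tset σ = Tset σ')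
    (hag : ∀ v, v ∉ Tset σ → σ v = σ' v) : σ = σ' := by
  ext v
  by_cases hv : v ∈ Tset σ
  · set s := σ v with hs
    have hsc : σ.SameCycle s v := ⟨-1, by simp [hs]⟩
    obtain ⟨i0, -, -, hi0⟩ := SameCycle.exists_pow_eq σ hsc
    have hex : ∃ j, (σ ^ j) s = v := ⟨i0, hi0⟩
    set j := Nat.find hex with hj
    have hjv : (σ ^ j) s = v := Nat.find_spec hex
    have hlt : ∀ i < j, (σ ^ i) s ≠ v := fun i hi => Nat.find_min hex hi
    have hnotT : ∀ i < j, (σ ^ i) s ∉ Tset σ := by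
      intro i hi hiT
      have h3 : σ.SameCycle v ((σ ^ i) s) :=
        hsc.symm.trans ⟨(i : ℤ), by simp [zpow_natCast]⟩
      exact hlt i hi (Tset_unique σ hiT hv h3.symm)
    have hpath : ∀ i ≤ j, (σ' ^ i) s = (σ ^ i) s := by
      intro i hi
      induction i with
      | zero => simp
      | succ m ih =>
        have hm : m ≤ j := Nat.le_of_succ_le hi
        have hmj : m < j := Nat.lt_of_succ_le hi
        have h4 : (σ' ^ (m + 1)) s = σ' ((σ' ^ m) s) := by
          rw [pow_succ']; rfl
        rw [h4, ih hm, ← hag _ (hnotT m hmj), ← Equiv.Perm.mul_apply, ← pow_succ']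
    have hjv' : (σ' ^ j) s = v := by rw [hpath j le_rfl, hjv]
    set u := σ'⁻¹ s with hu
    have hus : σ' u = s := σ'.apply_symm_apply s
    have huT : u ∈ Tset σ := by
      by_contra huT
      have : σ u = σ v := by rw [hag u huT, hus, hs]
      exact huT (by rw [σ.injective this]; exact hv)
    have h4 : σ'.SameCycle u s := ⟨1, by simpa using hus⟩
    have h5 : σ'.SameCycle s v := ⟨(j : ℤ), by simp [zpow_natCast, hjv']⟩
    have huv := Tset_unique σ' (hT ▸ huT) (hT ▸ hv) (h4.trans h5)
    rw [← huv, hus]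
  · exact hag v hv

end Aux

/-- The number of cycle covers of a `k`-regular directed graph on `n` vertices
having exactly `r` cycles is at most `C(n,r) * k^(n-r)`. Cycle covers are encoded
as permutations `σ` all of whose arcs `(v, σ v)` lie in the graph; the number of
cycles is the number of cycles of the permutation. -/
theorem cycle_cover_count_bound (V : Type) [Fintype V] [DecidableEq V]
    (n k r : ℕ) (hn : Fintype.card V = n)
    (G : V → V → Prop) (hloopless : ∀ v, ¬ G v v)
    (hout : ∀ v, {w | G v w}.ncard = k)
    (hin : ∀ v, {w | G w v}.ncard = k) :
    Nat.card {σ : Equiv.Perm V // (∀ v, G v (σ v)) ∧ σ.cycleType.card = r}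
      ≤ n.choose r * k ^ (n - r) := by
  classical
  letI : LinearOrder V := LinearOrder.lift' (Fintype.equivFin V) (Equiv.injective _)
  set Sig := (Σ T : (univ.powersetCard r : Finset (Finset V)),
      ∀ v : {v : V // v ∉ (T : Finset V)}, {w : V // G v.1 w}) with hSig
  -- the injection
  have hcardT : ∀ x : {σ : Equiv.Perm V // (∀ v, G v (σ v)) ∧ σ.cycleType.card = r},
      (Tset x.1).card = r := by
    intro x
    have hfp : ∀ v, x.1 v ≠ v := by
      intro v hv
      have h := x.2.1 v
      rw [hv] at h
      exact hloopless v h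
    rw [card_Tset x.1 hfp]
    exact x.2.2
  have hle : Nat.card {σ : Equiv.Perm V // (∀ v, G v (σ v)) ∧ σ.cycleType.card = r}
      ≤ Nat.card Sig := by
    refine Nat.card_le_card_of_injective
      (fun x => (⟨⟨Tset x.1, mem_powersetCard_univ.mpr (hcardT x)⟩,
        fun v => ⟨x.1 v.1, x.2.1 v.1⟩⟩ : Sig)) ?_
    intro x y hxy
    have hT : Tset x.1 = Tset y.1 := by
      have := congrArg (fun q : Sig => (q.1 : Finset V)) hxy
      simpa using this
    have hag : ∀ v, v ∉ Tset x.1 → x.1 v = y.1 v := by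
      intro v hv
      have hv' : v ∉ Tset y.1 := hT ▸ hv
      have := congrArg (fun q : Sig =>
        if h : v ∈ (q.1 : Finset V) then v else (q.2 ⟨v, h⟩).1) hxy
      simpa [dif_neg hv, dif_neg hv'] using this
    exact Subtype.ext (reconstruct x.1 y.1 hT hag)
  refine hle.trans ?_
  rw [hSig, Nat.card_eq_fintype_card, Fintype.card_sigma]
  have hfiber : ∀ T : (univ.powersetCard r : Finset (Finset V)),
      Fintype.card (∀ v : {v : V // v ∉ (T : Finset V)}, {w : V // G v.1 w})
        = k ^ (n - r) := by
    intro T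
    rw [Fintype.card_pi]
    have hkk : ∀ v : {v : V // v ∉ (T : Finset V)},
        Fintype.card {w : V // G v.1 w} = k := by
      intro v
      rw [← Nat.card_eq_fintype_card]
      exact (Nat.card_coe_set_eq {w | G v.1 w}).trans (hout v.1)
    rw [Finset.prod_congr rfl (fun v _ => hkk v), Finset.prod_const, Finset.card_univ]
    congr 1
    have hTc : (T : Finset V).card = r := mem_powersetCard_univ.mp T.2
    rw [Fintype.card_subtype_compl, hn]
    have hcc : Fintype.card {x : V // x ∈ (T : Finset V)} = r := by
      rw [Fintype.card_coe]; exact hTc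
    rw [hcc]
  rw [Finset.sum_congr rfl (fun T _ => hfiber T), Finset.sum_const, Finset.card_univ,
    Fintype.card_coe, Finset.card_powersetCard, Finset.card_univ, hn, smul_eq_mul]
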